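/- Let X be a Hausdorff space. For every continuous path p : I → X there exist a regular path q : I → X and a reparametrization φ : I → I such that p = q ∘ φ. -/

import Mathlib

open unitInterval

/-- `φ` is a reparametrization of the unit interval: a continuous weakly
increasing self-map of `I` with `φ 0 = 0` and `φ 1 = 1` (such a map is
automatically surjective). -/
def IsRepar (φ : I → I) : Prop :=
  Continuous φ ∧ Monotone φ ∧ φ 0 = 0 ∧ φ 1 = 1

/-- `p` is constant on the closed subinterval `[a, b]` of `I`. -/
def ConstOn {X : Type*} (p : I → X) (a b : I) : Prop :=
  ∀ s ∈ Set.Icc a b, ∀ t ∈ Set.Icc a b, p s = p t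


/-- A path `p : I → X` is regular if it is constant on no nondegenerate
closed subinterval of `I`, unless it is constant on all of `I`. -/
def IsRegularPath {X : Type*} (p : I → X) : Prop :=
  (∀ s t : I, p s = p t) ∨ ∀ a b : I, a < b → ¬ ConstOn p a b

namespace RegFact
set_option linter.unusedSectionVars false

open Set Topology

variable {X : Type*} [TopologicalSpace X] [T2Space X]

/-- `s` and `t` are equivalent: `p` is constant on the interval between them. -/
def Rel (p : I → X) (s t : I) : Prop := ∀ x ∈ Set.uIcc s t, p x = p s

theorem rel_refl (p : I → X) (s : I) : Rel p s s := fun _ hx => by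
  simp only [Set.uIcc_self, Set.mem_singleton_iff] at hx; rw [hx]

theorem rel_eq {p : I → X} {s t : I} (h : Rel p s t) : p t = p s :=
  h t Set.right_mem_uIcc

theorem rel_symm {p : I → X} {s t : I} (h : Rel p s t) : Rel p t s := by
  intro x hx
  rw [Set.uIcc_comm] at hx
  rw [h x hx, rel_eq h]

theorem rel_of_mem {p : I → X} {s t u v : I} (h : Rel p s t)
    (hu : u ∈ Set.uIcc s t) (hv : v ∈ Set.uIcc s t) : Rel p u v := by
  intro x hx
  have hx' : x ∈ Set.uIcc s t := Set.uIcc_subset_uIcc hu hv hx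
  rw [h x hx', h u hu]

theorem rel_trans {p : I → X} {s t u : I} (h1 : Rel p s t) (h2 : Rel p t u) :
    Rel p s u := by
  intro x hx
  rcases Set.uIcc_subset_uIcc_union_uIcc (b := t) hx with hx' | hx'
  · exact h1 x hx'
  · rw [h2 x hx', rel_eq h1]

/-- The class of `s` is strictly below the class of `t`. -/
def Lt' (p : I → X) (s t : I) : Prop := s < t ∧ ¬ Rel p s t

theorem lt'_irrefl {p : I → X} {s : I} (h : Lt' p s s) : False := lt_irrefl _ h.1

theorem lt'_asymm {p : I → X} {s t : I} (h : Lt' p s t) (h' : Lt' p t s) : False :=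
  lt_asymm h.1 h'.1

theorem lt'_of_le_left {p : I → X} {s s' t : I} (hs : s' ≤ s) (h : Lt' p s t) :
    Lt' p s' t := by
  refine ⟨lt_of_le_of_lt hs h.1, fun hrel => h.2 ?_⟩
  exact rel_of_mem hrel (Set.mem_uIcc.2 (Or.inl ⟨hs, le_of_lt h.1⟩)) Set.right_mem_uIcc

theorem lt'_of_le_right {p : I → X} {s t t' : I} (ht : t ≤ t') (h : Lt' p s t) :
    Lt' p s t' := by
  refine ⟨lt_of_lt_of_le h.1 ht, fun hrel => h.2 ?_⟩
  exact rel_of_mem hrel Set.left_mem_uIcc (Set.mem_uIcc.2 (Or.inl ⟨le_of_lt h.1, ht⟩))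

theorem lt'_congr_left {p : I → X} {s s' t : I} (hss : Rel p s s') (h : Lt' p s t) :
    Lt' p s' t := by
  have hnr : ¬ Rel p s' t := fun hr => h.2 (rel_trans hss hr)
  refine ⟨?_, hnr⟩
  by_contra hts
  push_neg at hts
  rcases le_or_gt s s' with hcase | hcase
  · exact h.2 (rel_of_mem hss Set.left_mem_uIcc
      (Set.mem_uIcc.2 (Or.inl ⟨le_of_lt h.1, hts⟩)))
  · exact absurd h.1 (not_lt.2 (le_of_lt (lt_of_le_of_lt hts hcase)))

theorem lt'_congr_right {p : I → X} {s t t' : I} (htt : Rel p t t') (h : Lt' p s t) :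
    Lt' p s t' := by
  have hnr : ¬ Rel p s t' := fun hr => h.2 (rel_trans hr (rel_symm htt))
  refine ⟨?_, hnr⟩
  by_contra hts
  push_neg at hts
  rcases le_or_gt t t' with hcase | hcase
  · exact absurd h.1 (not_lt.2 (le_trans hcase hts))
  · exact h.2 (rel_of_mem htt
      (Set.mem_uIcc.2 (Or.inr ⟨hts, le_of_lt h.1⟩)) Set.left_mem_uIcc)

theorem lt'_trans {p : I → X} {s t u : I} (h1 : Lt' p s t) (h2 : Lt' p t u) :
    Lt' p s u := by
  refine ⟨lt_trans h1.1 h2.1, fun hr => h1.2 ?_⟩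
  exact rel_of_mem hr Set.left_mem_uIcc
    (Set.mem_uIcc.2 (Or.inl ⟨le_of_lt h1.1, le_of_lt h2.1⟩))

theorem lt'_trichotomy (p : I → X) (s t : I) :
    Lt' p s t ∨ Rel p s t ∨ Lt' p t s := by
  by_cases hr : Rel p s t
  · exact Or.inr (Or.inl hr)
  rcases lt_trichotomy s t with h | h | h
  · exact Or.inl ⟨h, hr⟩
  · exact absurd (h ▸ rel_refl p s) hr
  · exact Or.inr (Or.inr ⟨h, fun h' => hr (rel_symm h')⟩)

/-- Key density lemma: between two inequivalent points there is a point of any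
dense set whose class is strictly between. -/
theorem exists_lt'_between {p : I → X} (hp : Continuous p) {D : Set I} (hD : Dense D)
    {s t : I} (h : Lt' p s t) : ∃ d ∈ D, Lt' p s d ∧ Lt' p d t := by
  classical
  -- the supremum of the class of s inside [s,t]
  set S : Set ℝ := Subtype.val '' {y : I | y ∈ Set.Icc s t ∧ Rel p s y} with hS
  have hsS : (s : ℝ) ∈ S := ⟨s, ⟨⟨le_refl s, le_of_lt h.1⟩, rel_refl p s⟩, rfl⟩
  have hSne : S.Nonempty := ⟨_, hsS⟩
  have hSbdd : BddAbove S := ⟨(t : ℝ), by rintro x ⟨y, hy, rfl⟩; exact_mod_cast hy.1.2⟩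
  set β' := sSup S with hβ'
  have hsβ : (s : ℝ) ≤ β' := le_csSup hSbdd hsS
  have hβt : β' ≤ (t : ℝ) := csSup_le hSne (by rintro x ⟨y, hy, rfl⟩; exact_mod_cast hy.1.2)
  have hβI : β' ∈ Set.Icc (0:ℝ) 1 := ⟨le_trans s.2.1 hsβ, le_trans hβt t.2.2⟩
  set β : I := ⟨β', hβI⟩ with hβdef
  have hsβ' : s ≤ β := hsβ
  have hβt' : β ≤ t := hβt
  -- values in the class of s form a closed set
  have hVclosed : IsClosed (Subtype.val '' (p ⁻¹' {p s}) : Set ℝ) :=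
    (((isClosed_singleton).preimage hp).isCompact.image continuous_subtype_val).isClosed
  have hrelβ : Rel p s β := by
    intro x hx
    rw [Set.uIcc_of_le hsβ'] at hx
    rcases lt_or_eq_of_le hx.2 with hlt | heq
    · obtain ⟨y, ⟨z, hz, rfl⟩, hxy⟩ := exists_lt_of_lt_csSup hSne hlt
      exact hz.2 x (by rw [Set.uIcc_of_le hz.1.1]; exact ⟨hx.1, le_of_lt hxy⟩)
    · have hmem : β' ∈ closure S := csSup_mem_closure hSne hSbdd
      have hsub : S ⊆ Subtype.val '' (p ⁻¹' {p s}) := by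
        rintro _ ⟨y, hy, rfl⟩
        exact ⟨y, by simpa using rel_eq hy.2, rfl⟩
      have : β' ∈ Subtype.val '' (p ⁻¹' {p s}) :=
        hVclosed.closure_subset ((closure_mono hsub) hmem)
      obtain ⟨z, hz, hzval⟩ := this
      have hxz : x = z := Subtype.ext (by rw [heq]; exact hzval.symm)
      rw [hxz]; simpa using hz
  -- the infimum of the class of t inside [s,t]
  set T : Set ℝ := Subtype.val '' {y : I | y ∈ Set.Icc s t ∧ Rel p t y} with hT
  have htT : (t : ℝ) ∈ T := ⟨t, ⟨⟨le_of_lt h.1, le_refl t⟩, rel_refl p t⟩, rfl⟩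
  have hTne : T.Nonempty := ⟨_, htT⟩
  have hTbdd : BddBelow T := ⟨(s : ℝ), by rintro x ⟨y, hy, rfl⟩; exact_mod_cast hy.1.1⟩
  set α' := sInf T with hα'
  have hαt : α' ≤ (t : ℝ) := csInf_le hTbdd htT
  have hsα : (s : ℝ) ≤ α' := le_csInf hTne (by rintro x ⟨y, hy, rfl⟩; exact_mod_cast hy.1.1)
  have hαI : α' ∈ Set.Icc (0:ℝ) 1 := ⟨le_trans s.2.1 hsα, le_trans hαt t.2.2⟩
  set α : I := ⟨α', hαI⟩ with hαdef
  have hαt'' : α ≤ t := hαt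
  have hsα' : s ≤ α := hsα
  have hVtclosed : IsClosed (Subtype.val '' (p ⁻¹' {p t}) : Set ℝ) :=
    (((isClosed_singleton).preimage hp).isCompact.image continuous_subtype_val).isClosed
  have hrelα : Rel p t α := by
    intro x hx
    rw [Set.uIcc_comm, Set.uIcc_of_le hαt''] at hx
    rcases lt_or_eq_of_le hx.1 with hlt | heq
    · obtain ⟨y, ⟨z, hz, rfl⟩, hxy⟩ := exists_lt_of_csInf_lt hTne hlt
      exact hz.2 x (by rw [Set.uIcc_comm, Set.uIcc_of_le hz.1.2]; exact ⟨le_of_lt hxy, hx.2⟩)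
    · have hmem : α' ∈ closure T := csInf_mem_closure hTne hTbdd
      have hsub : T ⊆ Subtype.val '' (p ⁻¹' {p t}) := by
        rintro _ ⟨y, hy, rfl⟩
        exact ⟨y, by simpa using rel_eq hy.2, rfl⟩
      have : α' ∈ Subtype.val '' (p ⁻¹' {p t}) :=
        hVtclosed.closure_subset ((closure_mono hsub) hmem)
      obtain ⟨z, hz, hzval⟩ := this
      have hxz : x = z := Subtype.ext (by rw [← heq]; exact hzval.symm)
      rw [hxz]; simpa using hz
  -- β < α
  have hβα : β < α := by
    by_contra hle
    push_neg at hle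
    have hαβ : α ∈ Set.uIcc s β := Set.mem_uIcc.2 (Or.inl ⟨hsα', hle⟩)
    have h1 : Rel p s α := rel_of_mem hrelβ Set.left_mem_uIcc hαβ
    exact h.2 (rel_trans h1 (rel_symm hrelα))
  -- pick a point of D strictly between
  obtain ⟨d, hdD, hd⟩ := hD.exists_mem_open isOpen_Ioo (nonempty_Ioo.2 hβα)
  refine ⟨d, hdD, ⟨lt_of_le_of_lt hsβ' hd.1, fun hrel => ?_⟩,
    ⟨lt_of_lt_of_le hd.2 hαt'', fun hrel => ?_⟩⟩
  · -- if s ~ d then d ∈ S, so d ≤ β, contradiction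
    have : (d : ℝ) ∈ S := ⟨d, ⟨⟨le_of_lt (lt_of_le_of_lt hsβ' hd.1),
      le_of_lt (lt_of_lt_of_le hd.2 hαt'')⟩, hrel⟩, rfl⟩
    exact absurd (le_csSup hSbdd this) (not_le.2 hd.1)
  · -- if d ~ t then d ∈ T, so α ≤ d, contradiction
    have : (d : ℝ) ∈ T := ⟨d, ⟨⟨le_of_lt (lt_of_le_of_lt hsβ' hd.1),
      le_of_lt (lt_of_lt_of_le hd.2 hαt'')⟩, rel_symm hrel⟩, rfl⟩
    exact absurd (csInf_le hTbdd this) (not_le.2 hd.2)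

section Quot

variable (p : I → X) (D : Set I)

/-- Points of the dense set whose class is strictly between the classes of 0 and 1. -/
def Dt := {d : I // d ∈ D ∧ Lt' p 0 d ∧ Lt' p d 1}

instance dtSetoid : Setoid (Dt p D) :=
  ⟨fun a b => Rel p a.1 b.1,
    fun a => rel_refl p a.1, fun h => rel_symm h, fun h1 h2 => rel_trans h1 h2⟩

/-- The countable set of classes used in the Cantor back-and-forth argument. -/
abbrev Q := Quotient (dtSetoid p D)

def Qlt : Q p D → Q p D → Prop :=
  Quotient.lift₂ (fun a b => Lt' p a.1 b.1) (by
    intro a b a' b' ha hb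
    exact propext ⟨fun h => lt'_congr_right hb (lt'_congr_left ha h),
      fun h => lt'_congr_right (rel_symm hb) (lt'_congr_left (rel_symm ha) h)⟩)

noncomputable instance instLinearOrderQ : LinearOrder (Q p D) where
  lt := Qlt p D
  le a b := ¬ Qlt p D b a
  le_refl a := Quotient.inductionOn a fun d h => lt'_irrefl h
  le_trans a b c := Quotient.inductionOn₃ a b c (fun d e f hde hef hfd => by
    rcases lt'_trichotomy p d.1 e.1 with h | h | h
    · exact hef (lt'_trans hfd h)
    · exact hef (lt'_congr_right h hfd)
    · exact hde h)
  le_antisymm a b := Quotient.inductionOn₂ a b (fun d e hde hed => by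
    rcases lt'_trichotomy p d.1 e.1 with h | h | h
    · exact absurd h hed
    · exact Quotient.sound h
    · exact absurd h hde)
  le_total a b := Quotient.inductionOn₂ a b (fun d e => by
    by_cases h : Lt' p e.1 d.1
    · exact Or.inr fun h' => lt'_asymm h h'
    · exact Or.inl h)
  lt_iff_le_not_ge a b := Quotient.inductionOn₂ a b (fun d e => by
    constructor
    · exact fun h => ⟨fun h' => lt'_asymm h h', fun h' => h' h⟩
    · exact fun ⟨h1, h2⟩ => not_not.1 h2)
  toDecidableLE := fun _ _ => Classical.dec _

theorem q_mk_lt_mk {d e : Dt p D} :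
    ((Quotient.mk (dtSetoid p D) d : Q p D) < (Quotient.mk (dtSetoid p D) e : Q p D)) ↔
      Lt' p d.1 e.1 :=
  Iff.rfl

theorem q_mk_le_mk {d e : Dt p D} :
    ((Quotient.mk (dtSetoid p D) d : Q p D) ≤ (Quotient.mk (dtSetoid p D) e : Q p D)) ↔
      ¬ Lt' p e.1 d.1 :=
  Iff.rfl

theorem countable_Q (hDc : D.Countable) : Countable (Q p D) := by
  haveI : Countable D := hDc.to_subtype
  haveI : Countable (Dt p D) := by
    refine Function.Injective.countable (f := fun d : Dt p D => (⟨d.1, d.2.1⟩ : D)) ?_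
    intro a b hab
    simp only [Subtype.mk.injEq] at hab
    exact Subtype.ext hab
  exact Quotient.countable

variable {p D}

theorem denselyOrdered_Q (hp : Continuous p) (hD : Dense D) :
    DenselyOrdered (Q p D) := by
  constructor
  intro a b
  refine Quotient.inductionOn₂ a b fun d e (h : Lt' p d.1 e.1) => ?_
  obtain ⟨c, hcD, h1, h2⟩ := exists_lt'_between hp hD h
  exact ⟨Quotient.mk _ ⟨c, hcD, lt'_of_le_left unitInterval.nonneg' h1,
    lt'_of_le_right unitInterval.le_one' h2⟩, h1, h2⟩

theorem noMinOrder_Q (hp : Continuous p) (hD : Dense D) : NoMinOrder (Q p D) := by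
  constructor
  intro a
  refine Quotient.inductionOn a fun d => ?_
  obtain ⟨c, hcD, h1, h2⟩ := exists_lt'_between hp hD d.2.2.1
  exact ⟨Quotient.mk _ ⟨c, hcD, h1, lt'_of_le_right unitInterval.le_one' h2⟩, h2⟩

theorem noMaxOrder_Q (hp : Continuous p) (hD : Dense D) : NoMaxOrder (Q p D) := by
  constructor
  intro a
  refine Quotient.inductionOn a fun d => ?_
  obtain ⟨c, hcD, h1, h2⟩ := exists_lt'_between hp hD d.2.2.2
  exact ⟨Quotient.mk _ ⟨c, hcD, lt'_of_le_left unitInterval.nonneg' h1, h2⟩, h1⟩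

theorem nonempty_Q (hp : Continuous p) (hD : Dense D) (h01 : Lt' p 0 1) :
    Nonempty (Q p D) := by
  obtain ⟨c, hcD, h1, h2⟩ := exists_lt'_between hp hD h01
  exact ⟨Quotient.mk _ ⟨c, hcD, h1, h2⟩⟩

variable (p D) in
/-- `Leq x t` : the class `x` is at most the class of `t`. -/
def Leq (x : Q p D) (t : I) : Prop :=
  Quotient.lift (fun d : Dt p D => ¬ Lt' p t d.1)
    (fun a b hab => propext
      ⟨fun h h' => h (lt'_congr_right (rel_symm hab) h'),
       fun h h' => h (lt'_congr_right hab h')⟩) x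

theorem leq_mk {d : Dt p D} {t : I} :
    Leq p D (Quotient.mk (dtSetoid p D) d) t ↔ ¬ Lt' p t d.1 :=
  Iff.rfl

end Quot

open Function in
theorem main {X : Type*} [TopologicalSpace X] [T2Space X]
    (p : I → X) (hp : Continuous p) :
    ∃ (q : I → X) (φ : I → I), Continuous q ∧ IsRegularPath q ∧
      IsRepar φ ∧ p = q ∘ φ := by
  classical
  by_cases hconst : ∀ s t : I, p s = p t
  · exact ⟨p, id, hp, Or.inl hconst, ⟨continuous_id, monotone_id, rfl, rfl⟩, rfl⟩
  -- the path is not constant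
  push_neg at hconst
  obtain ⟨s0, t0, hst0⟩ := hconst
  have h01lt : (0 : I) < 1 := by
    rw [← Subtype.coe_lt_coe]; norm_num
  have h01 : Lt' p 0 1 := by
    refine ⟨h01lt, fun hr => hst0 ?_⟩
    have e1 := hr s0 (Set.mem_uIcc.2 (Or.inl ⟨unitInterval.nonneg', unitInterval.le_one'⟩))
    have e2 := hr t0 (Set.mem_uIcc.2 (Or.inl ⟨unitInterval.nonneg', unitInterval.le_one'⟩))
    rw [e1, e2]
  obtain ⟨D, hDc, hDd⟩ := TopologicalSpace.exists_countable_dense I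
  haveI := countable_Q p D hDc
  haveI := denselyOrdered_Q hp hDd
  haveI := noMinOrder_Q hp hDd
  haveI := noMaxOrder_Q hp hDd
  haveI := nonempty_Q hp hDd h01
  obtain ⟨e0⟩ := Order.iso_of_countable_dense (Q p D) ℚ
  set iso := orderIsoIooNegOneOne ℝ with hisodef
  set E : Q p D → ℝ := fun x => ((iso ((e0 x : ℚ) : ℝ) : ℝ) + 1) / 2 with hEdef
  have hE01 : ∀ x, E x ∈ Set.Ioo (0:ℝ) 1 := by
    intro x
    have h := (iso ((e0 x : ℚ) : ℝ)).2
    exact ⟨by simp only [hEdef]; linarith [h.1], by simp only [hEdef]; linarith [h.2]⟩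
  have hEmono : StrictMono E := by
    intro x y hxy
    have h1 : ((e0 x : ℚ) : ℝ) < ((e0 y : ℚ) : ℝ) := by exact_mod_cast e0.strictMono hxy
    have h2 : (iso ((e0 x : ℚ) : ℝ) : ℝ) < (iso ((e0 y : ℚ) : ℝ) : ℝ) :=
      Subtype.coe_lt_coe.2 (iso.strictMono h1)
    simp only [hEdef]
    linarith
  -- density of the values of E
  have hEd : ∀ a b : ℝ, 0 ≤ a → b ≤ 1 → a < b → ∃ x, a < E x ∧ E x < b := by
    intro a b ha hb hab
    set lo := 2*a - 1 with hlodef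
    set hi := 2*b - 1 with hhidef
    have hlo : -1 ≤ lo := by simp only [hlodef]; linarith
    have hhi : hi ≤ 1 := by simp only [hhidef]; linarith
    have hlohi : lo < hi := by simp only [hlodef, hhidef]; linarith
    have hy2 : (3*lo + hi)/4 ∈ Set.Ioo (-1:ℝ) 1 := ⟨by linarith, by linarith⟩
    have hy : (lo + hi)/2 ∈ Set.Ioo (-1:ℝ) 1 := ⟨by linarith, by linarith⟩
    have h12 : iso.symm ⟨(3*lo + hi)/4, hy2⟩ < iso.symm ⟨(lo + hi)/2, hy⟩ :=
      iso.symm.strictMono (Subtype.mk_lt_mk.2 (by linarith))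
    obtain ⟨r, hr1, hr2⟩ := exists_rat_btwn h12
    have k1 : (3*lo + hi)/4 < (iso (r:ℝ) : ℝ) := by
      have h := iso.strictMono hr1
      rw [OrderIso.apply_symm_apply] at h
      exact Subtype.coe_lt_coe.2 h
    have k2 : (iso (r:ℝ) : ℝ) < (lo + hi)/2 := by
      have h := iso.strictMono hr2
      rw [OrderIso.apply_symm_apply] at h
      exact Subtype.coe_lt_coe.2 h
    refine ⟨e0.symm r, ?_, ?_⟩
    · have : E (e0.symm r) = ((iso (r:ℝ) : ℝ) + 1)/2 := by
        simp only [hEdef, OrderIso.apply_symm_apply]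
      rw [this]; simp only [hlodef, hhidef] at k1; linarith
    · have : E (e0.symm r) = ((iso (r:ℝ) : ℝ) + 1)/2 := by
        simp only [hEdef, OrderIso.apply_symm_apply]
      rw [this]; simp only [hlodef, hhidef] at k2; linarith
  -- the reparametrization, as a real-valued function
  set ψ : I → ℝ := fun t => sSup (insert (0:ℝ) (E '' {x | Leq p D x t})) with hψdef
  have hub : ∀ t : I, ∀ r ∈ insert (0:ℝ) (E '' {x | Leq p D x t}), r ≤ 1 := by
    rintro t r (rfl | ⟨x, -, rfl⟩)
    · norm_num
    · exact (hE01 x).2.le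
  have hbdd : ∀ t : I, BddAbove (insert (0:ℝ) (E '' {x | Leq p D x t})) :=
    fun t => ⟨1, hub t⟩
  have hne0 : ∀ t : I, (insert (0:ℝ) (E '' {x | Leq p D x t})).Nonempty :=
    fun t => ⟨0, Set.mem_insert _ _⟩
  have hψmem : ∀ t, ψ t ∈ Set.Icc (0:ℝ) 1 :=
    fun t => ⟨le_csSup (hbdd t) (Set.mem_insert _ _), csSup_le (hne0 t) (hub t)⟩
  have hψmono : ∀ s t : I, s ≤ t → ψ s ≤ ψ t := by
    intro s t hle
    refine csSup_le_csSup (hbdd t) (hne0 s)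
      (Set.insert_subset_insert (Set.image_mono ?_))
    intro x hx
    refine Quotient.inductionOn x (fun d hd htd => hd (lt'_of_le_left hle htd)) hx
  have hψrel : ∀ s t : I, Rel p s t → ψ s = ψ t := by
    intro s t hrel
    have hset : {x : Q p D | Leq p D x s} = {x | Leq p D x t} := by
      ext x
      refine Quotient.inductionOn x fun d => ?_
      exact not_congr ⟨fun h => lt'_congr_left hrel h,
        fun h => lt'_congr_left (rel_symm hrel) h⟩
    simp only [hψdef, hset]
  have hψd : ∀ d : Dt p D, ψ d.1 = E (Quotient.mk (dtSetoid p D) d) := by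
    intro d
    refine le_antisymm (csSup_le (hne0 _) ?_) (le_csSup (hbdd _) ?_)
    · rintro r (rfl | ⟨x, hx, rfl⟩)
      · exact (hE01 _).1.le
      · refine Quotient.inductionOn x (fun e (he : ¬ Lt' p d.1 e.1) => ?_) hx
        exact (hEmono.le_iff_le).2 ((q_mk_le_mk p D).2 he)
    · exact Set.mem_insert_of_mem _ ⟨Quotient.mk (dtSetoid p D) d,
        leq_mk.2 (fun h => lt'_irrefl h), rfl⟩
  have hψ0 : ψ 0 = 0 := by
    have hempty : {x : Q p D | Leq p D x 0} = ∅ :=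
      Set.eq_empty_iff_forall_notMem.2 fun x =>
        Quotient.inductionOn x fun d hd => hd d.2.2.1
    simp only [hψdef, hempty, Set.image_empty, insert_empty_eq, csSup_singleton]
  have hψ1 : ψ 1 = 1 := by
    have huniv : {x : Q p D | Leq p D x 1} = Set.univ :=
      Set.eq_univ_of_forall fun x =>
        Quotient.inductionOn x fun d (h : Lt' p 1 d.1) =>
          absurd h.1 (not_lt.2 unitInterval.le_one')
    simp only [hψdef, huniv, Set.image_univ]
    refine csSup_eq_of_forall_le_of_forall_lt_exists_gt ⟨0, Set.mem_insert _ _⟩ ?_ ?_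
    · rintro r (rfl | ⟨x, rfl⟩)
      · norm_num
      · exact (hE01 x).2.le
    · intro w hw
      rcases lt_or_ge w 0 with hw0 | hw0
      · exact ⟨0, Set.mem_insert _ _, hw0⟩
      · obtain ⟨x, hx1, -⟩ := hEd w 1 hw0 le_rfl hw
        exact ⟨E x, Set.mem_insert_of_mem _ ⟨x, rfl⟩, hx1⟩
  have hψlt : ∀ s t : I, Lt' p s t → ψ s < ψ t := by
    intro s t h
    obtain ⟨d1, hd1D, h1a, h1b⟩ := exists_lt'_between hp hDd h
    obtain ⟨d2, hd2D, h2a, h2b⟩ := exists_lt'_between hp hDd h1b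
    set D1 : Dt p D := ⟨d1, hd1D, lt'_of_le_left unitInterval.nonneg' h1a,
      lt'_of_le_right unitInterval.le_one' h1b⟩ with hD1
    set D2 : Dt p D := ⟨d2, hd2D, lt'_of_le_left unitInterval.nonneg' (lt'_trans h1a h2a),
      lt'_of_le_right unitInterval.le_one' h2b⟩ with hD2
    have step1 : ψ s ≤ E (Quotient.mk (dtSetoid p D) D1) := by
      refine csSup_le (hne0 s) ?_
      rintro r (rfl | ⟨x, hx, rfl⟩)
      · exact (hE01 _).1.le
      · refine Quotient.inductionOn x (fun e (he : ¬ Lt' p s e.1) => ?_) hx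
        have hlt : Lt' p e.1 d1 := by
          rcases lt'_trichotomy p e.1 s with hc | hc | hc
          · exact lt'_trans hc h1a
          · exact lt'_congr_left (rel_symm hc) h1a
          · exact absurd hc he
        exact (hEmono ((q_mk_lt_mk p D).2 hlt)).le
    have step2 : E (Quotient.mk (dtSetoid p D) D1) < E (Quotient.mk (dtSetoid p D) D2) :=
      hEmono ((q_mk_lt_mk p D).2 h2a)
    have step3 : E (Quotient.mk (dtSetoid p D) D2) ≤ ψ t :=
      le_csSup (hbdd t) (Set.mem_insert_of_mem _
        ⟨Quotient.mk (dtSetoid p D) D2, leq_mk.2 (fun h' => lt'_asymm h2b h'), rfl⟩)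
    exact lt_of_le_of_lt step1 (lt_of_lt_of_le step2 step3)
  have hkey : ∀ s t : I, ψ s = ψ t → Rel p s t := by
    intro s t heq
    rcases lt_trichotomy s t with hc | hc | hc
    · by_contra hnr
      exact absurd heq (ne_of_lt (hψlt s t ⟨hc, hnr⟩))
    · rw [hc]; exact rel_refl p t
    · by_contra hnr
      exact absurd heq.symm (ne_of_lt (hψlt t s ⟨hc, fun h' => hnr (rel_symm h')⟩))
  -- the reparametrization
  set φ : I → I := fun t => ⟨ψ t, hψmem t⟩ with hφdef
  have hφmono : Monotone φ := fun s t h => Subtype.mk_le_mk.2 (hψmono s t h)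
  have hφ0 : φ 0 = 0 := Subtype.ext (by simpa [hφdef] using hψ0)
  have hφ1 : φ 1 = 1 := Subtype.ext (by simpa [hφdef] using hψ1)
  have hφdr : DenseRange φ := by
    refine dense_of_exists_between ?_
    intro a b hab
    obtain ⟨x, hx1, hx2⟩ := hEd a b a.2.1 b.2.2 (Subtype.coe_lt_coe.2 hab)
    obtain ⟨d, rfl⟩ := Quotient.exists_rep x
    refine ⟨φ d.1, Set.mem_range_self _, ?_, ?_⟩
    · rw [← Subtype.coe_lt_coe]
      show (a : ℝ) < ψ d.1
      rw [hψd d]; exact hx1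
    · rw [← Subtype.coe_lt_coe]
      show (ψ d.1 : ℝ) < b
      rw [hψd d]; exact hx2
  have hφc : Continuous φ := hφmono.continuous_of_denseRange hφdr
  have hφsurj : Function.Surjective φ := by
    intro y
    have hiv := intermediate_value_univ (0:I) 1 hφc
    rw [hφ0, hφ1] at hiv
    exact hiv ⟨unitInterval.nonneg', unitInterval.le_one'⟩
  -- the regular path
  set q : I → X := fun u => p (surjInv hφsurj u) with hqdef
  have hfac : p = q ∘ φ := by
    funext t
    have h1 : φ (surjInv hφsurj (φ t)) = φ t := surjInv_eq hφsurj (φ t)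
    have h2 : ψ (surjInv hφsurj (φ t)) = ψ t := congrArg Subtype.val h1
    exact rel_eq (hkey _ _ h2)
  have hqc : Continuous q := by
    have hqm : Topology.IsQuotientMap φ := (hφc.isClosedMap).isQuotientMap hφc hφsurj
    rw [hqm.continuous_iff]
    rw [← hfac]
    exact hp
  have hreg : ∀ a b : I, a < b → ¬ ConstOn q a b := by
    intro a b hab hC
    have ha : φ (surjInv hφsurj a) = a := surjInv_eq hφsurj a
    have hb : φ (surjInv hφsurj b) = b := surjInv_eq hφsurj b
    set s' := surjInv hφsurj a
    set t' := surjInv hφsurj b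
    have hst' : s' ≤ t' := by
      rcases le_or_gt s' t' with h | h
      · exact h
      · exact absurd (ha ▸ hb ▸ hφmono h.le) (not_le.2 hab)
    have hrel : Rel p s' t' := by
      intro x hx
      rw [Set.uIcc_of_le hst'] at hx
      have h1 : φ x ∈ Set.Icc a b := ⟨ha ▸ hφmono hx.1, hb ▸ hφmono hx.2⟩
      have h2 : q (φ x) = q (φ s') := by
        rw [ha]
        exact hC (φ x) h1 a ⟨le_refl a, hab.le⟩
      have e1 : p x = q (φ x) := congrFun hfac x
      have e2 : p s' = q (φ s') := congrFun hfac s'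
      rw [e1, h2, ← e2]
    have heq : ψ s' = ψ t' := hψrel s' t' hrel
    have : a = b := by
      rw [← ha, ← hb]
      exact Subtype.ext heq
    exact absurd this hab.ne
  exact ⟨q, φ, hqc, Or.inr hreg, ⟨hφc, hφmono, hφ0, hφ1⟩, hfac⟩

end RegFact

/-- Every continuous path `p : I → X` into a Hausdorff space factors as
`p = q ∘ φ` with `q` a regular (continuous) path and `φ` a
reparametrization. -/
theorem exists_regular_factorization
    {X : Type*} [TopologicalSpace X] [T2Space X]
    (p : I → X) (hp : Continuous p) :
    ∃ (q : I → X) (φ : I → I), Continuous q ∧ IsRegularPath q ∧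
      IsRepar φ ∧ p = q ∘ φ :=
  RegFact.main p hp
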